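/- For every real ζ with 0 ≤ ζ < 0.046, the second derivative at ζ of the function ζ ↦ ln h(0.454, ζ, ξ₁(ζ)) is less than −2.46; in particular, this function is strictly concave on [0, 0.046). -/

import Mathlib

/-- The function `f(χ,ζ)` (real exponentiation, with the convention `0^0 = 1`). -/
noncomputable def ffun (χ ζ : ℝ) : ℝ :=
  ((3 : ℝ) ^ (1 / 2 - 4 * χ + 2 * ζ)
      * (1 - 2 * χ - 2 * ζ) ^ (1 - 2 * χ - 2 * ζ)
      * (1 - 2 * χ + 4 * ζ) ^ (1 - 2 * χ + 4 * ζ)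
      * (6 * χ - 3 / 2 + 3 * ζ) ^ (6 * χ - 3 / 2 + 3 * ζ)
      * (6 * χ - 3 / 2 - 9 * ζ) ^ (6 * χ - 3 / 2 - 9 * ζ)) /
    ((2 * χ + ζ - 1 / 2) ^ (2 * χ + ζ - 1 / 2)
      * (2 : ℝ) ^ (1 - 2 * χ + ζ)
      * (1 / 2 - χ - ζ) ^ (1 / 2 - χ - ζ)
      * (1 / 2 - χ + 2 * ζ) ^ (1 / 2 - χ + 2 * ζ)
      * (2 * χ - 3 * ζ - 1 / 2) ^ (2 * χ - 3 * ζ - 1 / 2))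

/-- The function `g(χ,ζ,ξ)` (real exponentiation, with the convention `0^0 = 1`). -/
noncomputable def gfun (χ ζ ξ : ℝ) : ℝ :=
  ((2 : ℝ) ^ (2 * ξ) * (1 / 1.618) ^ ξ) /
    (ξ ^ ξ
      * (1 - 2 * χ - 2 * ζ - ξ) ^ (1 - 2 * χ - 2 * ζ - ξ)
      * (1 - 2 * χ + 4 * ζ - ξ) ^ (1 - 2 * χ + 4 * ζ - ξ)
      * (10 * χ - 7 / 2 - 5 * ζ + ξ) ^ (10 * χ - 7 / 2 - 5 * ζ + ξ))

/-- The function `h(χ,ζ,ξ) = f(χ,ζ) · g(χ,ζ,ξ)`. -/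
noncomputable def hfun (χ ζ ξ : ℝ) : ℝ := ffun χ ζ * gfun χ ζ ξ

/-- The domain `Ω`. -/
def Omega : Set (ℝ × ℝ × ℝ) :=
  {p | 0.454 < p.1 ∧ p.1 ≤ 0.45537 ∧ 0 ≤ p.2.1 ∧ p.2.1 ≤ 1 / 2 - p.1 ∧
    0 ≤ p.2.2 ∧ p.2.2 ≤ 1 - 2 * p.1 - 2 * p.2.1}

/-- The coefficient `b(ζ)` (with `χ = 0.454`). -/
noncomputable def bcoef (ζ : ℝ) : ℝ := -0.18 * 0.454 + 0.09 * ζ - 2.337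

/-- The coefficient `c(ζ)` (with `χ = 0.454`). -/
noncomputable def ccoef (ζ : ℝ) : ℝ :=
  16 * 0.454 ^ 2 - 32 * ζ ^ 2 - 16 * 0.454 + 8 * ζ - 16 * 0.454 * ζ + 4

/-- The discriminant `Δ(ζ) = b(ζ)² − 4ac(ζ)` with `a = 2.382`. -/
noncomputable def Δcoef (ζ : ℝ) : ℝ := (bcoef ζ) ^ 2 - 4 * 2.382 * (ccoef ζ)

/-- The root `ξ₁(ζ) = (−b(ζ) − √Δ(ζ)) / (2a)` with `a = 2.382`. -/
noncomputable def xi1 (ζ : ℝ) : ℝ := (-(bcoef ζ) - Real.sqrt (Δcoef ζ)) / (2 * 2.382)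

set_option linter.unusedSectionVars false



lemma hasDerivAt_affine (A B z : ℝ) : HasDerivAt (fun y => A + B * y) B z := by
  simpa using ((hasDerivAt_id z).const_mul B).const_add A

lemma hd_lin (A B z : ℝ) (f : ℝ → ℝ) (hf : ∀ y, f y = A + B * y) : HasDerivAt f B z :=
  (hasDerivAt_affine A B z).congr_of_eventuallyEq (Filter.Eventually.of_forall hf)

lemma hd_quad (A B C z : ℝ) (f : ℝ → ℝ) (hf : ∀ y, f y = A * y ^ 2 + B * y + C) :
    HasDerivAt f (2 * A * z + B) z := by
  have h : HasDerivAt (fun y : ℝ => A * y ^ 2 + B * y + C) (2 * A * z + B) z := by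
    have h1 := (hasDerivAt_pow 2 z).const_mul A
    have h2 := (hasDerivAt_id z).const_mul B
    have := (h1.add h2).add_const C
    refine this.congr_deriv ?_
    simp; ring
  exact h.congr_of_eventuallyEq (Filter.Eventually.of_forall hf)

lemma hd_p {t : ℝ → ℝ} {t' z : ℝ} (h : HasDerivAt t t' z) (h0 : t z ≠ 0) :
    HasDerivAt (fun y => Real.log (t y) * t y) (t' * (Real.log (t z) + 1)) z := by
  have := (h.log h0).mul h
  refine this.congr_deriv ?_
  field_simp
  ring

lemma Δcoef_eq (z : ℝ) : Δcoef z = 304.9041 * z ^ 2 - 7.4479776 * z + 5.5276264704 := by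
  unfold Δcoef bcoef ccoef; ring

lemma Δcoef_lb (z : ℝ) : 5.4821 ≤ Δcoef z := by
  rw [Δcoef_eq]; nlinarith [sq_nonneg (z - 0.0122136)]

noncomputable def sd (z : ℝ) : ℝ := Real.sqrt (Δcoef z)

lemma sd_sq (z : ℝ) : sd z ^ 2 = Δcoef z := Real.sq_sqrt (by nlinarith [Δcoef_lb z])

lemma sd_lb (z : ℝ) : 2.3413 ≤ sd z := by
  have h1 := sd_sq z
  have h2 : 0 ≤ sd z := Real.sqrt_nonneg _
  have h3 := Δcoef_lb z
  nlinarith [sq_nonneg (sd z - 2.3413)]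

lemma sd_pos (z : ℝ) : 0 < sd z := lt_of_lt_of_le (by norm_num) (sd_lb z)

section Pos
variable {z : ℝ} (hz0 : -0.001 < z) (hz1 : z < 0.046)
include hz0 hz1

lemma sd_lt_negb : sd z < -(bcoef z) := by
  have h1 := sd_sq z
  have h2 : 0 ≤ sd z := Real.sqrt_nonneg _
  have hb : -(bcoef z) > 2.414 := by unfold bcoef; linarith
  have hc : (0:ℝ) < 32 * (0.046 - z) * (z + 0.023) := by nlinarith
  have hΔb : Δcoef z = bcoef z ^ 2 - 4 * 2.382 * ccoef z := rfl
  have hcc : ccoef z = 32 * (0.046 - z) * (z + 0.023) := by unfold ccoef; ring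
  nlinarith [h1, hc, mul_pos (show (0:ℝ) < sd z + -(bcoef z) by linarith) hc]

lemma xi1_pos : 0 < xi1 z := by
  have := sd_lt_negb hz0 hz1
  unfold xi1 sd at *
  have : -(bcoef z) - Real.sqrt (Δcoef z) > 0 := by
    have h : sd z = Real.sqrt (Δcoef z) := rfl
    linarith [this]
  positivity

omit hz0 hz1 in
lemma xi1_eq : xi1 z = (-(bcoef z) - sd z) / (2 * 2.382) := rfl

lemma xi1_ub : xi1 z < 0.017 := by
  have h1 := sd_lb z
  have hb : -(bcoef z) < 2.41882 := by unfold bcoef; linarith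
  rw [xi1_eq]
  rw [div_lt_iff₀ (by norm_num : (0:ℝ) < 2 * 2.382)]
  linarith

lemma u_pos : 0 < 1 - 2 * 0.454 - 2 * z - xi1 z := by
  have h1 := sd_sq z
  have h2 : 0 ≤ sd z := Real.sqrt_nonneg _
  -- need sd z > 1.980432 + 9.438 z
  have key : 1.980432 + 9.438 * z < sd z := by
    have hpoly : Δcoef z - (1.980432 + 9.438 * z) ^ 2
        = (0.046 - z) * (34.902512256 - 215.828256 * z) := by
      rw [Δcoef_eq]; ring
    have hf : (0:ℝ) < (0.046 - z) * (34.902512256 - 215.828256 * z) := by nlinarith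
    nlinarith [h1, hf, h2]
  rw [xi1_eq, sub_pos, div_lt_iff₀ (by norm_num : (0:ℝ) < 2 * 2.382)]
  unfold bcoef
  nlinarith [key]

lemma v_pos : 0 < 1 - 2 * 0.454 + 4 * z - xi1 z := by
  have h1 := sd_sq z
  have h2 : 0 ≤ sd z := Real.sqrt_nonneg _
  have key : 1.980432 - 19.146 * z < sd z := by
    have hpoly : Δcoef z - (1.980432 - 19.146 * z) ^ 2
        = 61.665216 * ((z + 0.023) * (1.132 - z)) := by
      rw [Δcoef_eq]; ring
    have hf : (0:ℝ) < 61.665216 * ((z + 0.023) * (1.132 - z)) := by nlinarith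
    nlinarith [h1, hf, h2]
  rw [xi1_eq, sub_pos, div_lt_iff₀ (by norm_num : (0:ℝ) < 2 * 2.382)]
  unfold bcoef
  nlinarith [key]

lemma w_pos : 0 < 10 * 0.454 - 7 / 2 - 5 * z + xi1 z := by
  have := xi1_pos hz0 hz1
  linarith

end Pos

noncomputable def xid (z : ℝ) : ℝ :=
  (-(0.09) - 1 / (2 * sd z) * (2 * 304.9041 * z + -7.4479776)) / (2 * 2.382)

lemma hasDerivAt_xi1 (z : ℝ) : HasDerivAt xi1 (xid z) z := by
  have hΔ : HasDerivAt Δcoef (2 * 304.9041 * z + -7.4479776) z :=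
    hd_quad 304.9041 (-7.4479776) 5.5276264704 z _ (fun y => by rw [Δcoef_eq]; ring)
  have hΔne : Δcoef z ≠ 0 := by nlinarith [Δcoef_lb z]
  have hsq : HasDerivAt (fun y => Real.sqrt (Δcoef y))
      (1 / (2 * sd z) * (2 * 304.9041 * z + -7.4479776)) z := by
    have := (Real.hasDerivAt_sqrt hΔne).comp z hΔ
    simpa [Function.comp_def, sd] using this
  have hb : HasDerivAt bcoef 0.09 z :=
    hd_lin (-0.18 * 0.454 - 2.337) 0.09 z _ (fun y => by unfold bcoef; ring)
  have := (hb.neg.sub hsq).div_const (2 * 2.382)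
  exact this

noncomputable def S (z : ℝ) : ℝ :=
  (Real.log 3 * (1 / 2 - 4 * 0.454 + 2 * z)
    + Real.log (1 - 2 * 0.454 - 2 * z) * (1 - 2 * 0.454 - 2 * z)
    + Real.log (1 - 2 * 0.454 + 4 * z) * (1 - 2 * 0.454 + 4 * z)
    + Real.log (6 * 0.454 - 3 / 2 + 3 * z) * (6 * 0.454 - 3 / 2 + 3 * z)
    + Real.log (6 * 0.454 - 3 / 2 - 9 * z) * (6 * 0.454 - 3 / 2 - 9 * z))
  - (Real.log (2 * 0.454 + z - 1 / 2) * (2 * 0.454 + z - 1 / 2)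
    + Real.log 2 * (1 - 2 * 0.454 + z)
    + Real.log (1 / 2 - 0.454 - z) * (1 / 2 - 0.454 - z)
    + Real.log (1 / 2 - 0.454 + 2 * z) * (1 / 2 - 0.454 + 2 * z)
    + Real.log (2 * 0.454 - 3 * z - 1 / 2) * (2 * 0.454 - 3 * z - 1 / 2))
  + (Real.log 2 * (2 * xi1 z) + Real.log (1 / 1.618) * (xi1 z))
  - (Real.log (xi1 z) * (xi1 z)
    + Real.log (1 - 2 * 0.454 - 2 * z - xi1 z) * (1 - 2 * 0.454 - 2 * z - xi1 z)
    + Real.log (1 - 2 * 0.454 + 4 * z - xi1 z) * (1 - 2 * 0.454 + 4 * z - xi1 z)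
    + Real.log (10 * 0.454 - 7 / 2 - 5 * z + xi1 z) * (10 * 0.454 - 7 / 2 - 5 * z + xi1 z))

section LogH
variable {z : ℝ} (hz0 : -0.001 < z) (hz1 : z < 0.046)
include hz0 hz1

lemma log_h_eq : Real.log (hfun 0.454 z (xi1 z)) = S z := by
  have p3 : (0:ℝ) < 3 := by norm_num
  have p2 : (0:ℝ) < 2 := by norm_num
  have pg : (0:ℝ) < 1 / 1.618 := by norm_num
  have pA1 : (0:ℝ) < 1 - 2 * 0.454 - 2 * z := by norm_num; linarith
  have pA2 : (0:ℝ) < 1 - 2 * 0.454 + 4 * z := by norm_num; linarith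
  have pA3 : (0:ℝ) < 6 * 0.454 - 3 / 2 + 3 * z := by norm_num; linarith
  have pA4 : (0:ℝ) < 6 * 0.454 - 3 / 2 - 9 * z := by norm_num; linarith
  have pA5 : (0:ℝ) < 2 * 0.454 + z - 1 / 2 := by norm_num; linarith
  have pA6 : (0:ℝ) < 1 / 2 - 0.454 - z := by norm_num; linarith
  have pA7 : (0:ℝ) < 1 / 2 - 0.454 + 2 * z := by norm_num; linarith
  have pA8 : (0:ℝ) < 2 * 0.454 - 3 * z - 1 / 2 := by norm_num; linarith
  have pxi := xi1_pos hz0 hz1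
  have pu := u_pos hz0 hz1
  have pv := v_pos hz0 hz1
  have pw := w_pos hz0 hz1
  unfold hfun ffun gfun
  rw [Real.rpow_def_of_pos p3, Real.rpow_def_of_pos pA1, Real.rpow_def_of_pos pA2,
    Real.rpow_def_of_pos pA3, Real.rpow_def_of_pos pA4, Real.rpow_def_of_pos pA5,
    Real.rpow_def_of_pos p2, Real.rpow_def_of_pos pA6, Real.rpow_def_of_pos pA7,
    Real.rpow_def_of_pos pA8, Real.rpow_def_of_pos p2, Real.rpow_def_of_pos pg,
    Real.rpow_def_of_pos pxi, Real.rpow_def_of_pos pu, Real.rpow_def_of_pos pv,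
    Real.rpow_def_of_pos pw]
  rw [← Real.exp_add, ← Real.exp_add, ← Real.exp_add, ← Real.exp_add, ← Real.exp_add,
    ← Real.exp_add, ← Real.exp_add, ← Real.exp_add, ← Real.exp_sub, ← Real.exp_add,
    ← Real.exp_add, ← Real.exp_add, ← Real.exp_add, ← Real.exp_sub, ← Real.exp_add,
    Real.log_exp]
  unfold S
  ring

end LogH

noncomputable def F1 (z : ℝ) : ℝ :=
  2 * Real.log 3 - Real.log 2
  - 2 * Real.log (1 - 2 * 0.454 - 2 * z) + 4 * Real.log (1 - 2 * 0.454 + 4 * z)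
  + 3 * Real.log (6 * 0.454 - 3 / 2 + 3 * z) - 9 * Real.log (6 * 0.454 - 3 / 2 - 9 * z)
  - Real.log (2 * 0.454 + z - 1 / 2) + Real.log (1 / 2 - 0.454 - z)
  - 2 * Real.log (1 / 2 - 0.454 + 2 * z) + 3 * Real.log (2 * 0.454 - 3 * z - 1 / 2)
  + 2 * Real.log (1 - 2 * 0.454 - 2 * z - xi1 z)
  - 4 * Real.log (1 - 2 * 0.454 + 4 * z - xi1 z)
  + 5 * Real.log (10 * 0.454 - 7 / 2 - 5 * z + xi1 z)

section Deriv1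
variable {z : ℝ} (hz0 : -0.001 < z) (hz1 : z < 0.046)
include hz0 hz1

lemma quad_key : (4:ℝ) * ((1 - 2 * 0.454 - 2 * z - xi1 z) * (1 - 2 * 0.454 + 4 * z - xi1 z))
    = 1.618 * (xi1 z * (10 * 0.454 - 7 / 2 - 5 * z + xi1 z)) := by
  have hss := sd_sq z
  rw [Δcoef_eq] at hss
  rw [xi1_eq]
  unfold bcoef
  linear_combination hss / 9.528

lemma bracket_zero :
    Real.log 2 * 2 + Real.log (1 / 1.618) - Real.log (xi1 z)
      + Real.log (1 - 2 * 0.454 - 2 * z - xi1 z)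
      + Real.log (1 - 2 * 0.454 + 4 * z - xi1 z)
      - Real.log (10 * 0.454 - 7 / 2 - 5 * z + xi1 z) = 0 := by
  have pxi := xi1_pos hz0 hz1
  have pu := u_pos hz0 hz1
  have pv := v_pos hz0 hz1
  have pw := w_pos hz0 hz1
  have h1 : Real.log ((4:ℝ) * ((1 - 2 * 0.454 - 2 * z - xi1 z) * (1 - 2 * 0.454 + 4 * z - xi1 z)))
      = Real.log (1.618 * (xi1 z * (10 * 0.454 - 7 / 2 - 5 * z + xi1 z))) := by
    rw [quad_key hz0 hz1]
  rw [Real.log_mul (by norm_num) (by positivity), Real.log_mul pu.ne' pv.ne',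
    Real.log_mul (by norm_num) (by positivity), Real.log_mul pxi.ne' pw.ne'] at h1
  have h4 : Real.log (4:ℝ) = 2 * Real.log 2 := by
    rw [show (4:ℝ) = 2 ^ (2:ℕ) by norm_num, Real.log_pow]; push_cast; ring
  have hinv : Real.log (1 / 1.618 : ℝ) = -Real.log 1.618 := by
    rw [one_div, Real.log_inv]
  rw [h4] at h1
  linarith [h1]

lemma hasDerivAt_S : HasDerivAt S
    (F1 z + xid z * (Real.log 2 * 2 + Real.log (1 / 1.618) - Real.log (xi1 z)
      + Real.log (1 - 2 * 0.454 - 2 * z - xi1 z)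
      + Real.log (1 - 2 * 0.454 + 4 * z - xi1 z)
      - Real.log (10 * 0.454 - 7 / 2 - 5 * z + xi1 z))) z := by
  have pA1 : (0:ℝ) < 1 - 2 * 0.454 - 2 * z := by norm_num; linarith
  have pA2 : (0:ℝ) < 1 - 2 * 0.454 + 4 * z := by norm_num; linarith
  have pA3 : (0:ℝ) < 6 * 0.454 - 3 / 2 + 3 * z := by norm_num; linarith
  have pA4 : (0:ℝ) < 6 * 0.454 - 3 / 2 - 9 * z := by norm_num; linarith
  have pA5 : (0:ℝ) < 2 * 0.454 + z - 1 / 2 := by norm_num; linarith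
  have pA6 : (0:ℝ) < 1 / 2 - 0.454 - z := by norm_num; linarith
  have pA7 : (0:ℝ) < 1 / 2 - 0.454 + 2 * z := by norm_num; linarith
  have pA8 : (0:ℝ) < 2 * 0.454 - 3 * z - 1 / 2 := by norm_num; linarith
  have pxi := xi1_pos hz0 hz1
  have pu := u_pos hz0 hz1
  have pv := v_pos hz0 hz1
  have pw := w_pos hz0 hz1
  have hxi := hasDerivAt_xi1 z
  have l1 : HasDerivAt (fun y : ℝ => 1 - 2 * 0.454 - 2 * y) (-2) z :=
    hd_lin (1 - 2 * 0.454) (-2) z (fun y => 1 - 2 * 0.454 - 2 * y) (fun y => by ring)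
  have l2 : HasDerivAt (fun y : ℝ => 1 - 2 * 0.454 + 4 * y) 4 z :=
    hd_lin (1 - 2 * 0.454) 4 z _ (fun y => by ring)
  have l3 : HasDerivAt (fun y : ℝ => 6 * 0.454 - 3 / 2 + 3 * y) 3 z :=
    hd_lin (6 * 0.454 - 3 / 2) 3 z _ (fun y => by ring)
  have l4 : HasDerivAt (fun y : ℝ => 6 * 0.454 - 3 / 2 - 9 * y) (-9) z :=
    hd_lin (6 * 0.454 - 3 / 2) (-9) z _ (fun y => by ring)
  have l5 : HasDerivAt (fun y : ℝ => 2 * 0.454 + y - 1 / 2) 1 z :=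
    hd_lin (2 * 0.454 - 1 / 2) 1 z _ (fun y => by ring)
  have l6 : HasDerivAt (fun y : ℝ => 1 / 2 - 0.454 - y) (-1) z :=
    hd_lin (1 / 2 - 0.454) (-1) z _ (fun y => by ring)
  have l7 : HasDerivAt (fun y : ℝ => 1 / 2 - 0.454 + 2 * y) 2 z :=
    hd_lin (1 / 2 - 0.454) 2 z _ (fun y => by ring)
  have l8 : HasDerivAt (fun y : ℝ => 2 * 0.454 - 3 * y - 1 / 2) (-3) z :=
    hd_lin (2 * 0.454 - 1 / 2) (-3) z _ (fun y => by ring)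
  have lu : HasDerivAt (fun y : ℝ => 1 - 2 * 0.454 - 2 * y - xi1 y) (-2 - xid z) z := l1.sub hxi
  have lv : HasDerivAt (fun y : ℝ => 1 - 2 * 0.454 + 4 * y - xi1 y) (4 - xid z) z := l2.sub hxi
  have lw : HasDerivAt (fun y : ℝ => 10 * 0.454 - 7 / 2 - 5 * y + xi1 y) (-5 + xid z) z :=
    (hd_lin (10 * 0.454 - 7 / 2) (-5) z _ (fun y => by ring)).add hxi
  have h3 : HasDerivAt (fun y : ℝ => Real.log 3 * (1 / 2 - 4 * 0.454 + 2 * y))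
      (Real.log 3 * 2) z :=
    HasDerivAt.const_mul _ (hd_lin (1 / 2 - 4 * 0.454) 2 z _ (fun y => by ring))
  have hT2 : HasDerivAt (fun y : ℝ => Real.log 2 * (1 - 2 * 0.454 + y))
      (Real.log 2 * 1) z :=
    HasDerivAt.const_mul _ (hd_lin (1 - 2 * 0.454) 1 z _ (fun y => by ring))
  have hT2' : HasDerivAt (fun y : ℝ => Real.log 2 * (2 * xi1 y))
      (Real.log 2 * (2 * xid z)) z := HasDerivAt.const_mul _ (hxi.const_mul 2)
  have hTg : HasDerivAt (fun y : ℝ => Real.log (1 / 1.618) * (xi1 y))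
      (Real.log (1 / 1.618) * xid z) z := HasDerivAt.const_mul _ hxi
  have hp1 := hd_p l1 pA1.ne'
  have hp2 := hd_p l2 pA2.ne'
  have hp3 := hd_p l3 pA3.ne'
  have hp4 := hd_p l4 pA4.ne'
  have hp5 := hd_p l5 pA5.ne'
  have hp6 := hd_p l6 pA6.ne'
  have hp7 := hd_p l7 pA7.ne'
  have hp8 := hd_p l8 pA8.ne'
  have hpxi := hd_p hxi pxi.ne'
  have hpu := hd_p lu pu.ne'
  have hpv := hd_p lv pv.ne'
  have hpw := hd_p lw pw.ne'
  have H := (((((((h3.add hp1).add hp2).add hp3).add hp4).sub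
      ((((hp5.add hT2).add hp6).add hp7).add hp8)).add (hT2'.add hTg)).sub
      (((hpxi.add hpu).add hpv).add hpw))
  have hSeq : HasDerivAt S _ z := H
  convert hSeq using 1
  unfold F1
  ring
end Deriv1

noncomputable def F2 (z : ℝ) : ℝ :=
  4 / (1 - 2 * 0.454 - 2 * z) + 16 / (1 - 2 * 0.454 + 4 * z)
  + 9 / (6 * 0.454 - 3 / 2 + 3 * z) + 81 / (6 * 0.454 - 3 / 2 - 9 * z)
  - 1 / (2 * 0.454 + z - 1 / 2) - 1 / (1 / 2 - 0.454 - z)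
  - 4 / (1 / 2 - 0.454 + 2 * z) - 9 / (2 * 0.454 - 3 * z - 1 / 2)
  + 2 * ((-2 - xid z) / (1 - 2 * 0.454 - 2 * z - xi1 z))
  - 4 * ((4 - xid z) / (1 - 2 * 0.454 + 4 * z - xi1 z))
  + 5 * ((-5 + xid z) / (10 * 0.454 - 7 / 2 - 5 * z + xi1 z))

section Deriv2
variable {z : ℝ} (hz0 : -0.001 < z) (hz1 : z < 0.046)
include hz0 hz1

lemma hasDerivAt_S' : HasDerivAt S (F1 z) z := by
  have h := hasDerivAt_S hz0 hz1
  rw [bracket_zero hz0 hz1] at h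
  simpa using h

lemma hasDerivAt_F1 : HasDerivAt F1 (F2 z) z := by
  have pA1 : (0:ℝ) < 1 - 2 * 0.454 - 2 * z := by norm_num; linarith
  have pA2 : (0:ℝ) < 1 - 2 * 0.454 + 4 * z := by norm_num; linarith
  have pA3 : (0:ℝ) < 6 * 0.454 - 3 / 2 + 3 * z := by norm_num; linarith
  have pA4 : (0:ℝ) < 6 * 0.454 - 3 / 2 - 9 * z := by norm_num; linarith
  have pA5 : (0:ℝ) < 2 * 0.454 + z - 1 / 2 := by norm_num; linarith
  have pA6 : (0:ℝ) < 1 / 2 - 0.454 - z := by norm_num; linarith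
  have pA7 : (0:ℝ) < 1 / 2 - 0.454 + 2 * z := by norm_num; linarith
  have pA8 : (0:ℝ) < 2 * 0.454 - 3 * z - 1 / 2 := by norm_num; linarith
  have pxi := xi1_pos hz0 hz1
  have pu := u_pos hz0 hz1
  have pv := v_pos hz0 hz1
  have pw := w_pos hz0 hz1
  have hxi := hasDerivAt_xi1 z
  have l1 : HasDerivAt (fun y : ℝ => 1 - 2 * 0.454 - 2 * y) (-2) z :=
    hd_lin (1 - 2 * 0.454) (-2) z _ (fun y => by ring)
  have l2 : HasDerivAt (fun y : ℝ => 1 - 2 * 0.454 + 4 * y) 4 z :=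
    hd_lin (1 - 2 * 0.454) 4 z _ (fun y => by ring)
  have l3 : HasDerivAt (fun y : ℝ => 6 * 0.454 - 3 / 2 + 3 * y) 3 z :=
    hd_lin (6 * 0.454 - 3 / 2) 3 z _ (fun y => by ring)
  have l4 : HasDerivAt (fun y : ℝ => 6 * 0.454 - 3 / 2 - 9 * y) (-9) z :=
    hd_lin (6 * 0.454 - 3 / 2) (-9) z _ (fun y => by ring)
  have l5 : HasDerivAt (fun y : ℝ => 2 * 0.454 + y - 1 / 2) 1 z :=
    hd_lin (2 * 0.454 - 1 / 2) 1 z _ (fun y => by ring)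
  have l6 : HasDerivAt (fun y : ℝ => 1 / 2 - 0.454 - y) (-1) z :=
    hd_lin (1 / 2 - 0.454) (-1) z _ (fun y => by ring)
  have l7 : HasDerivAt (fun y : ℝ => 1 / 2 - 0.454 + 2 * y) 2 z :=
    hd_lin (1 / 2 - 0.454) 2 z _ (fun y => by ring)
  have l8 : HasDerivAt (fun y : ℝ => 2 * 0.454 - 3 * y - 1 / 2) (-3) z :=
    hd_lin (2 * 0.454 - 1 / 2) (-3) z _ (fun y => by ring)
  have lu : HasDerivAt (fun y : ℝ => 1 - 2 * 0.454 - 2 * y - xi1 y) (-2 - xid z) z := l1.sub hxi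
  have lv : HasDerivAt (fun y : ℝ => 1 - 2 * 0.454 + 4 * y - xi1 y) (4 - xid z) z := l2.sub hxi
  have lw : HasDerivAt (fun y : ℝ => 10 * 0.454 - 7 / 2 - 5 * y + xi1 y) (-5 + xid z) z :=
    (hd_lin (10 * 0.454 - 7 / 2) (-5) z _ (fun y => by ring)).add hxi
  have H := ((((((((((((hasDerivAt_const z (2 * Real.log 3 - Real.log 2)).sub
      ((l1.log pA1.ne').const_mul 2)).add
      ((l2.log pA2.ne').const_mul 4)).add
      ((l3.log pA3.ne').const_mul 3)).sub
      ((l4.log pA4.ne').const_mul 9)).sub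
      (l5.log pA5.ne')).add
      (l6.log pA6.ne')).sub
      ((l7.log pA7.ne').const_mul 2)).add
      ((l8.log pA8.ne').const_mul 3)).add
      ((lu.log pu.ne').const_mul 2)).sub
      ((lv.log pv.ne').const_mul 4)).add
      ((lw.log pw.ne').const_mul 5))
  have hF : HasDerivAt F1 _ z := H
  convert hF using 1
  unfold F2
  ring
end Deriv2

set_option maxHeartbeats 2000000 in
lemma F2_lt_0 {z : ℝ} (hl : (0:ℝ) ≤ z) (hr : z ≤ 0.023) (hz1 : z < 0.046) : F2 z < -2.46 := by
  have hz0 : (0:ℝ) ≤ z := by linarith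
  have hzm : (-0.001:ℝ) < z := by linarith
  have pA1 : (0:ℝ) < 1 - 2 * 0.454 - 2 * z := by norm_num; linarith
  have pA2 : (0:ℝ) < 1 - 2 * 0.454 + 4 * z := by norm_num; linarith
  have pA3 : (0:ℝ) < 6 * 0.454 - 3 / 2 + 3 * z := by norm_num; linarith
  have pA4 : (0:ℝ) < 6 * 0.454 - 3 / 2 - 9 * z := by norm_num; linarith
  have pA5 : (0:ℝ) < 2 * 0.454 + z - 1 / 2 := by norm_num; linarith
  have pA6 : (0:ℝ) < 1 / 2 - 0.454 - z := by norm_num; linarith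
  have pA7 : (0:ℝ) < 1 / 2 - 0.454 + 2 * z := by norm_num; linarith
  have pA8 : (0:ℝ) < 2 * 0.454 - 3 * z - 1 / 2 := by norm_num; linarith
  have pxi := xi1_pos hzm hz1
  have pu := u_pos hzm hz1
  have pv := v_pos hzm hz1
  have pw := w_pos hzm hz1
  have hxiub := xi1_ub hzm hz1
  have hss := sd_sq z
  rw [Δcoef_eq] at hss
  have hsnn : 0 ≤ sd z := Real.sqrt_nonneg _
  have e1 : (4:ℝ) / (1 - 2 * 0.454 - 2 * z) = 2 / (1 / 2 - 0.454 - z) := by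
    rw [div_eq_div_iff pA1.ne' pA6.ne']; ring
  have hsl2 : (2.3413:ℝ) ≤ sd z := by
    nlinarith [hss, hsnn, sq_nonneg (z - 0.0122136)]
  have hsu : sd z ≤ 2.3512 := by
    nlinarith [hss, hsnn, mul_nonneg (show (0:ℝ) ≤ z - 0 by linarith)
      (show (0:ℝ) ≤ 0.023 - z by linarith)]
  have hE2 : (1 / (2 * sd z) * (2 * 304.9041 * z + -7.4479776)) * (2 * sd z)
      = 2 * 304.9041 * z + -7.4479776 := by
    field_simp
  have hML : 1 / (2 * sd z) * (2 * 304.9041 * z + -7.4479776) ≤ 1.4049432 := by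
    nlinarith [hE2, hsl2, hsu, hl, hr, sd_pos z]
  have hMU : (-1.59066:ℝ) ≤ 1 / (2 * sd z) * (2 * 304.9041 * z + -7.4479776) := by
    nlinarith [hE2, hsl2, hsu, hl, hr, sd_pos z]
  have hL : (-0.3138:ℝ) ≤ xid z := by
    unfold xid; rw [le_div_iff₀ (by norm_num : (0:ℝ) < 2 * 2.382)]; linarith
  have hU : xid z ≤ 0.315 := by
    unfold xid; rw [div_le_iff₀ (by norm_num : (0:ℝ) < 2 * 2.382)]; linarith
  have hb1 : 2 * ((-2 - xid z) / (1 - 2 * 0.454 - 2 * z - xi1 z))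
      ≤ (-1.6862) / (1 / 2 - 0.454 - z) := by
    rw [show (2:ℝ) * ((-2 - xid z) / (1 - 2 * 0.454 - 2 * z - xi1 z))
        = (2 * (-2 - xid z)) / (1 - 2 * 0.454 - 2 * z - xi1 z) from by ring,
      div_le_div_iff₀ pu pA6]
    nlinarith [mul_nonneg (show (0:ℝ) ≤ xid z - (-0.3138) by linarith) pA6.le,
      mul_nonneg (show (0:ℝ) ≤ 2 + (-0.3138) by norm_num)
        (show (0:ℝ) ≤ 2 * (1 / 2 - 0.454 - z) - (1 - 2 * 0.454 - 2 * z - xi1 z) by linarith [pxi])]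
  have hb1c : 2 / (1 / 2 - 0.454 - z) - 1 / (1 / 2 - 0.454 - z)
      + (-1.6862) / (1 / 2 - 0.454 - z) ≤ -14.917391 := by
    rw [show (2:ℝ) / (1 / 2 - 0.454 - z) - 1 / (1 / 2 - 0.454 - z)
        + (-1.6862) / (1 / 2 - 0.454 - z)
        = (-0.6862) / (1 / 2 - 0.454 - z) from by ring, div_le_iff₀ pA6]
    linarith
  have e2 : (4:ℝ) / (1 / 2 - 0.454 + 2 * z) = 8 / (1 - 2 * 0.454 + 4 * z) := by
    rw [div_eq_div_iff pA7.ne' pA2.ne']; ring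
  have hb2 : (14.74:ℝ) / (1 - 2 * 0.454 + 4 * z)
      ≤ 4 * ((4 - xid z) / (1 - 2 * 0.454 + 4 * z - xi1 z)) := by
    rw [show (4:ℝ) * ((4 - xid z) / (1 - 2 * 0.454 + 4 * z - xi1 z))
        = (4 * (4 - xid z)) / (1 - 2 * 0.454 + 4 * z - xi1 z) from by ring,
      div_le_div_iff₀ pA2 pv]
    nlinarith [mul_nonneg (show (0:ℝ) ≤ (14.74:ℝ) by norm_num)
        (show (0:ℝ) ≤ (1 - 2 * 0.454 + 4 * z) - (1 - 2 * 0.454 + 4 * z - xi1 z) by linarith [pxi]),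
      mul_nonneg (show (0:ℝ) ≤ (0.315) - xid z by linarith) pA2.le]
  have hb2c : 16 / (1 - 2 * 0.454 + 4 * z) - 8 / (1 - 2 * 0.454 + 4 * z)
      - (14.74:ℝ) / (1 - 2 * 0.454 + 4 * z) ≤ -36.630434 := by
    rw [show (16:ℝ) / (1 - 2 * 0.454 + 4 * z) - 8 / (1 - 2 * 0.454 + 4 * z)
        - (14.74:ℝ) / (1 - 2 * 0.454 + 4 * z)
        = (-6.74) / (1 - 2 * 0.454 + 4 * z) from by ring, div_le_iff₀ pA2]
    linarith
  have hwub : 10 * 0.454 - 7 / 2 - 5 * z + xi1 z ≤ 1.057 := by linarith [hxiub]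
  have hb3 : 5 * ((-5 + xid z) / (10 * 0.454 - 7 / 2 - 5 * z + xi1 z)) ≤ -22.161778 := by
    rw [show (5:ℝ) * ((-5 + xid z) / (10 * 0.454 - 7 / 2 - 5 * z + xi1 z))
        = (5 * (-5 + xid z)) / (10 * 0.454 - 7 / 2 - 5 * z + xi1 z) from by ring,
      div_le_iff₀ pw]
    nlinarith [hU, hwub, pw]
  have hb4 : 9 / (6 * 0.454 - 3 / 2 + 3 * z) ≤ 7.352942 := by
    rw [div_le_iff₀ pA3]; linarith
  have hb5 : 81 / (6 * 0.454 - 3 / 2 - 9 * z) ≤ 79.646018 := by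
    rw [div_le_iff₀ pA4]; linarith
  have hb6 : (2.320185:ℝ) ≤ 1 / (2 * 0.454 + z - 1 / 2) := by
    rw [le_div_iff₀ pA5]; linarith
  have hb7 : (22.058823:ℝ) ≤ 9 / (2 * 0.454 - 3 * z - 1 / 2) := by
    rw [le_div_iff₀ pA8]; linarith
  unfold F2
  linarith [e1, e2, hb1, hb1c, hb2, hb2c, hb3, hb4, hb5, hb6, hb7]

set_option maxHeartbeats 2000000 in
lemma F2_lt_1 {z : ℝ} (hl : (0.023:ℝ) ≤ z) (hr : z ≤ 0.0345) (hz1 : z < 0.046) : F2 z < -2.46 := by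
  have hz0 : (0:ℝ) ≤ z := by linarith
  have hzm : (-0.001:ℝ) < z := by linarith
  have pA1 : (0:ℝ) < 1 - 2 * 0.454 - 2 * z := by norm_num; linarith
  have pA2 : (0:ℝ) < 1 - 2 * 0.454 + 4 * z := by norm_num; linarith
  have pA3 : (0:ℝ) < 6 * 0.454 - 3 / 2 + 3 * z := by norm_num; linarith
  have pA4 : (0:ℝ) < 6 * 0.454 - 3 / 2 - 9 * z := by norm_num; linarith
  have pA5 : (0:ℝ) < 2 * 0.454 + z - 1 / 2 := by norm_num; linarith
  have pA6 : (0:ℝ) < 1 / 2 - 0.454 - z := by norm_num; linarith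
  have pA7 : (0:ℝ) < 1 / 2 - 0.454 + 2 * z := by norm_num; linarith
  have pA8 : (0:ℝ) < 2 * 0.454 - 3 * z - 1 / 2 := by norm_num; linarith
  have pxi := xi1_pos hzm hz1
  have pu := u_pos hzm hz1
  have pv := v_pos hzm hz1
  have pw := w_pos hzm hz1
  have hxiub := xi1_ub hzm hz1
  have hss := sd_sq z
  rw [Δcoef_eq] at hss
  have hsnn : 0 ≤ sd z := Real.sqrt_nonneg _
  have e1 : (4:ℝ) / (1 - 2 * 0.454 - 2 * z) = 2 / (1 / 2 - 0.454 - z) := by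
    rw [div_eq_div_iff pA1.ne' pA6.ne']; ring
  have hsl2 : (2.3489:ℝ) ≤ sd z := by
    nlinarith [hss, hsnn, mul_nonneg (show (0:ℝ) ≤ z - 0.023 by linarith)
      (show (0:ℝ) ≤ 304.9041 * (z + 0.023) - 7.4479776 by linarith)]
  have hsu : sd z ≤ 2.3736 := by
    nlinarith [hss, hsnn, mul_nonneg (show (0:ℝ) ≤ z - 0.023 by linarith)
      (show (0:ℝ) ≤ 0.0345 - z by linarith)]
  have hE2 : (1 / (2 * sd z) * (2 * 304.9041 * z + -7.4479776)) * (2 * sd z)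
      = 2 * 304.9041 * z + -7.4479776 := by
    field_simp
  have hML : 1 / (2 * sd z) * (2 * 304.9041 * z + -7.4479776) ≤ 2.8932168 := by
    nlinarith [hE2, hsl2, hsu, hl, hr, sd_pos z]
  have hMU : (1.3854108:ℝ) ≤ 1 / (2 * sd z) * (2 * 304.9041 * z + -7.4479776) := by
    nlinarith [hE2, hsl2, hsu, hl, hr, sd_pos z]
  have hL : (-0.6262:ℝ) ≤ xid z := by
    unfold xid; rw [le_div_iff₀ (by norm_num : (0:ℝ) < 2 * 2.382)]; linarith
  have hU : xid z ≤ -0.3097 := by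
    unfold xid; rw [div_le_iff₀ (by norm_num : (0:ℝ) < 2 * 2.382)]; linarith
  have hb1 : 2 * ((-2 - xid z) / (1 - 2 * 0.454 - 2 * z - xi1 z))
      ≤ (-1.3738) / (1 / 2 - 0.454 - z) := by
    rw [show (2:ℝ) * ((-2 - xid z) / (1 - 2 * 0.454 - 2 * z - xi1 z))
        = (2 * (-2 - xid z)) / (1 - 2 * 0.454 - 2 * z - xi1 z) from by ring,
      div_le_div_iff₀ pu pA6]
    nlinarith [mul_nonneg (show (0:ℝ) ≤ xid z - (-0.6262) by linarith) pA6.le,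
      mul_nonneg (show (0:ℝ) ≤ 2 + (-0.6262) by norm_num)
        (show (0:ℝ) ≤ 2 * (1 / 2 - 0.454 - z) - (1 - 2 * 0.454 - 2 * z - xi1 z) by linarith [pxi])]
  have hb1c : 2 / (1 / 2 - 0.454 - z) - 1 / (1 / 2 - 0.454 - z)
      + (-1.3738) / (1 / 2 - 0.454 - z) ≤ -16.252173 := by
    rw [show (2:ℝ) / (1 / 2 - 0.454 - z) - 1 / (1 / 2 - 0.454 - z)
        + (-1.3738) / (1 / 2 - 0.454 - z)
        = (-0.3738) / (1 / 2 - 0.454 - z) from by ring, div_le_iff₀ pA6]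
    linarith
  have e2 : (4:ℝ) / (1 / 2 - 0.454 + 2 * z) = 8 / (1 - 2 * 0.454 + 4 * z) := by
    rw [div_eq_div_iff pA7.ne' pA2.ne']; ring
  have hb2 : (17.2388:ℝ) / (1 - 2 * 0.454 + 4 * z)
      ≤ 4 * ((4 - xid z) / (1 - 2 * 0.454 + 4 * z - xi1 z)) := by
    rw [show (4:ℝ) * ((4 - xid z) / (1 - 2 * 0.454 + 4 * z - xi1 z))
        = (4 * (4 - xid z)) / (1 - 2 * 0.454 + 4 * z - xi1 z) from by ring,
      div_le_div_iff₀ pA2 pv]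
    nlinarith [mul_nonneg (show (0:ℝ) ≤ (17.2388:ℝ) by norm_num)
        (show (0:ℝ) ≤ (1 - 2 * 0.454 + 4 * z) - (1 - 2 * 0.454 + 4 * z - xi1 z) by linarith [pxi]),
      mul_nonneg (show (0:ℝ) ≤ (-0.3097) - xid z by linarith) pA2.le]
  have hb2c : 16 / (1 - 2 * 0.454 + 4 * z) - 8 / (1 - 2 * 0.454 + 4 * z)
      - (17.2388:ℝ) / (1 - 2 * 0.454 + 4 * z) ≤ -40.168695 := by
    rw [show (16:ℝ) / (1 - 2 * 0.454 + 4 * z) - 8 / (1 - 2 * 0.454 + 4 * z)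
        - (17.2388:ℝ) / (1 - 2 * 0.454 + 4 * z)
        = (-9.2388) / (1 - 2 * 0.454 + 4 * z) from by ring, div_le_iff₀ pA2]
    linarith
  have hwub : 10 * 0.454 - 7 / 2 - 5 * z + xi1 z ≤ 0.942 := by linarith [hxiub]
  have hb3 : 5 * ((-5 + xid z) / (10 * 0.454 - 7 / 2 - 5 * z + xi1 z)) ≤ -28.183121 := by
    rw [show (5:ℝ) * ((-5 + xid z) / (10 * 0.454 - 7 / 2 - 5 * z + xi1 z))
        = (5 * (-5 + xid z)) / (10 * 0.454 - 7 / 2 - 5 * z + xi1 z) from by ring,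
      div_le_iff₀ pw]
    nlinarith [hU, hwub, pw]
  have hb4 : 9 / (6 * 0.454 - 3 / 2 + 3 * z) ≤ 6.960557 := by
    rw [div_le_iff₀ pA3]; linarith
  have hb5 : 81 / (6 * 0.454 - 3 / 2 - 9 * z) ≤ 88.669951 := by
    rw [div_le_iff₀ pA4]; linarith
  have hb6 : (2.259887:ℝ) ≤ 1 / (2 * 0.454 + z - 1 / 2) := by
    rw [le_div_iff₀ pA5]; linarith
  have hb7 : (26.548672:ℝ) ≤ 9 / (2 * 0.454 - 3 * z - 1 / 2) := by
    rw [le_div_iff₀ pA8]; linarith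
  unfold F2
  linarith [e1, e2, hb1, hb1c, hb2, hb2c, hb3, hb4, hb5, hb6, hb7]

set_option maxHeartbeats 2000000 in
lemma F2_lt_2 {z : ℝ} (hl : (0.0345:ℝ) ≤ z) (hr : z ≤ 0.04025) (hz1 : z < 0.046) : F2 z < -2.46 := by
  have hz0 : (0:ℝ) ≤ z := by linarith
  have hzm : (-0.001:ℝ) < z := by linarith
  have pA1 : (0:ℝ) < 1 - 2 * 0.454 - 2 * z := by norm_num; linarith
  have pA2 : (0:ℝ) < 1 - 2 * 0.454 + 4 * z := by norm_num; linarith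
  have pA3 : (0:ℝ) < 6 * 0.454 - 3 / 2 + 3 * z := by norm_num; linarith
  have pA4 : (0:ℝ) < 6 * 0.454 - 3 / 2 - 9 * z := by norm_num; linarith
  have pA5 : (0:ℝ) < 2 * 0.454 + z - 1 / 2 := by norm_num; linarith
  have pA6 : (0:ℝ) < 1 / 2 - 0.454 - z := by norm_num; linarith
  have pA7 : (0:ℝ) < 1 / 2 - 0.454 + 2 * z := by norm_num; linarith
  have pA8 : (0:ℝ) < 2 * 0.454 - 3 * z - 1 / 2 := by norm_num; linarith
  have pxi := xi1_pos hzm hz1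
  have pu := u_pos hzm hz1
  have pv := v_pos hzm hz1
  have pw := w_pos hzm hz1
  have hxiub := xi1_ub hzm hz1
  have hss := sd_sq z
  rw [Δcoef_eq] at hss
  have hsnn : 0 ≤ sd z := Real.sqrt_nonneg _
  have e1 : (4:ℝ) / (1 - 2 * 0.454 - 2 * z) = 2 / (1 / 2 - 0.454 - z) := by
    rw [div_eq_div_iff pA1.ne' pA6.ne']; ring
  have hsl2 : (2.3735:ℝ) ≤ sd z := by
    nlinarith [hss, hsnn, mul_nonneg (show (0:ℝ) ≤ z - 0.0345 by linarith)
      (show (0:ℝ) ≤ 304.9041 * (z + 0.0345) - 7.4479776 by linarith)]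
  have hsu : sd z ≤ 2.3921 := by
    nlinarith [hss, hsnn, mul_nonneg (show (0:ℝ) ≤ z - 0.0345 by linarith)
      (show (0:ℝ) ≤ 0.04025 - z by linarith)]
  have hE2 : (1 / (2 * sd z) * (2 * 304.9041 * z + -7.4479776)) * (2 * sd z)
      = 2 * 304.9041 * z + -7.4479776 := by
    field_simp
  have hML : 1 / (2 * sd z) * (2 * 304.9041 * z + -7.4479776) ≤ 3.6016236 := by
    nlinarith [hE2, hsl2, hsu, hl, hr, sd_pos z]
  have hMU : (2.8403364:ℝ) ≤ 1 / (2 * sd z) * (2 * 304.9041 * z + -7.4479776) := by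
    nlinarith [hE2, hsl2, hsu, hl, hr, sd_pos z]
  have hL : (-0.7749:ℝ) ≤ xid z := by
    unfold xid; rw [le_div_iff₀ (by norm_num : (0:ℝ) < 2 * 2.382)]; linarith
  have hU : xid z ≤ -0.6151 := by
    unfold xid; rw [div_le_iff₀ (by norm_num : (0:ℝ) < 2 * 2.382)]; linarith
  have hb1 : 2 * ((-2 - xid z) / (1 - 2 * 0.454 - 2 * z - xi1 z))
      ≤ (-1.2251) / (1 / 2 - 0.454 - z) := by
    rw [show (2:ℝ) * ((-2 - xid z) / (1 - 2 * 0.454 - 2 * z - xi1 z))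
        = (2 * (-2 - xid z)) / (1 - 2 * 0.454 - 2 * z - xi1 z) from by ring,
      div_le_div_iff₀ pu pA6]
    nlinarith [mul_nonneg (show (0:ℝ) ≤ xid z - (-0.7749) by linarith) pA6.le,
      mul_nonneg (show (0:ℝ) ≤ 2 + (-0.7749) by norm_num)
        (show (0:ℝ) ≤ 2 * (1 / 2 - 0.454 - z) - (1 - 2 * 0.454 - 2 * z - xi1 z) by linarith [pxi])]
  have hb1c : 2 / (1 / 2 - 0.454 - z) - 1 / (1 / 2 - 0.454 - z)
      + (-1.2251) / (1 / 2 - 0.454 - z) ≤ -19.573913 := by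
    rw [show (2:ℝ) / (1 / 2 - 0.454 - z) - 1 / (1 / 2 - 0.454 - z)
        + (-1.2251) / (1 / 2 - 0.454 - z)
        = (-0.2251) / (1 / 2 - 0.454 - z) from by ring, div_le_iff₀ pA6]
    linarith
  have e2 : (4:ℝ) / (1 / 2 - 0.454 + 2 * z) = 8 / (1 - 2 * 0.454 + 4 * z) := by
    rw [div_eq_div_iff pA7.ne' pA2.ne']; ring
  have hb2 : (18.4604:ℝ) / (1 - 2 * 0.454 + 4 * z)
      ≤ 4 * ((4 - xid z) / (1 - 2 * 0.454 + 4 * z - xi1 z)) := by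
    rw [show (4:ℝ) * ((4 - xid z) / (1 - 2 * 0.454 + 4 * z - xi1 z))
        = (4 * (4 - xid z)) / (1 - 2 * 0.454 + 4 * z - xi1 z) from by ring,
      div_le_div_iff₀ pA2 pv]
    nlinarith [mul_nonneg (show (0:ℝ) ≤ (18.4604:ℝ) by norm_num)
        (show (0:ℝ) ≤ (1 - 2 * 0.454 + 4 * z) - (1 - 2 * 0.454 + 4 * z - xi1 z) by linarith [pxi]),
      mul_nonneg (show (0:ℝ) ≤ (-0.6151) - xid z by linarith) pA2.le]
  have hb2c : 16 / (1 - 2 * 0.454 + 4 * z) - 8 / (1 - 2 * 0.454 + 4 * z)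
      - (18.4604:ℝ) / (1 - 2 * 0.454 + 4 * z) ≤ -41.345454 := by
    rw [show (16:ℝ) / (1 - 2 * 0.454 + 4 * z) - 8 / (1 - 2 * 0.454 + 4 * z)
        - (18.4604:ℝ) / (1 - 2 * 0.454 + 4 * z)
        = (-10.4604) / (1 - 2 * 0.454 + 4 * z) from by ring, div_le_iff₀ pA2]
    linarith
  have hwub : 10 * 0.454 - 7 / 2 - 5 * z + xi1 z ≤ 0.8845 := by linarith [hxiub]
  have hb3 : 5 * ((-5 + xid z) / (10 * 0.454 - 7 / 2 - 5 * z + xi1 z)) ≤ -31.741661 := by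
    rw [show (5:ℝ) * ((-5 + xid z) / (10 * 0.454 - 7 / 2 - 5 * z + xi1 z))
        = (5 * (-5 + xid z)) / (10 * 0.454 - 7 / 2 - 5 * z + xi1 z) from by ring,
      div_le_iff₀ pw]
    nlinarith [hU, hwub, pw]
  have hb4 : 9 / (6 * 0.454 - 3 / 2 + 3 * z) ≤ 6.779662 := by
    rw [div_le_iff₀ pA3]; linarith
  have hb5 : 81 / (6 * 0.454 - 3 / 2 - 9 * z) ≤ 93.994779 := by
    rw [div_le_iff₀ pA4]; linarith
  have hb6 : (2.230897:ℝ) ≤ 1 / (2 * 0.454 + z - 1 / 2) := by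
    rw [le_div_iff₀ pA5]; linarith
  have hb7 : (29.55665:ℝ) ≤ 9 / (2 * 0.454 - 3 * z - 1 / 2) := by
    rw [le_div_iff₀ pA8]; linarith
  unfold F2
  linarith [e1, e2, hb1, hb1c, hb2, hb2c, hb3, hb4, hb5, hb6, hb7]

set_option maxHeartbeats 2000000 in
lemma F2_lt_3 {z : ℝ} (hl : (0.04025:ℝ) ≤ z) (hr : z ≤ 0.046) (hz1 : z < 0.046) : F2 z < -2.46 := by
  have hz0 : (0:ℝ) ≤ z := by linarith
  have hzm : (-0.001:ℝ) < z := by linarith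
  have pA1 : (0:ℝ) < 1 - 2 * 0.454 - 2 * z := by norm_num; linarith
  have pA2 : (0:ℝ) < 1 - 2 * 0.454 + 4 * z := by norm_num; linarith
  have pA3 : (0:ℝ) < 6 * 0.454 - 3 / 2 + 3 * z := by norm_num; linarith
  have pA4 : (0:ℝ) < 6 * 0.454 - 3 / 2 - 9 * z := by norm_num; linarith
  have pA5 : (0:ℝ) < 2 * 0.454 + z - 1 / 2 := by norm_num; linarith
  have pA6 : (0:ℝ) < 1 / 2 - 0.454 - z := by norm_num; linarith
  have pA7 : (0:ℝ) < 1 / 2 - 0.454 + 2 * z := by norm_num; linarith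
  have pA8 : (0:ℝ) < 2 * 0.454 - 3 * z - 1 / 2 := by norm_num; linarith
  have pxi := xi1_pos hzm hz1
  have pu := u_pos hzm hz1
  have pv := v_pos hzm hz1
  have pw := w_pos hzm hz1
  have hxiub := xi1_ub hzm hz1
  have hss := sd_sq z
  rw [Δcoef_eq] at hss
  have hsnn : 0 ≤ sd z := Real.sqrt_nonneg _
  have e1 : (4:ℝ) / (1 - 2 * 0.454 - 2 * z) = 2 / (1 / 2 - 0.454 - z) := by
    rw [div_eq_div_iff pA1.ne' pA6.ne']; ring
  have hsl2 : (2.392:ℝ) ≤ sd z := by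
    nlinarith [hss, hsnn, mul_nonneg (show (0:ℝ) ≤ z - 0.04025 by linarith)
      (show (0:ℝ) ≤ 304.9041 * (z + 0.04025) - 7.4479776 by linarith)]
  have hsu : sd z ≤ 2.4146 := by
    nlinarith [hss, hsnn, mul_nonneg (show (0:ℝ) ≤ z - 0.04025 by linarith)
      (show (0:ℝ) ≤ 0.046 - z by linarith)]
  have hE2 : (1 / (2 * sd z) * (2 * 304.9041 * z + -7.4479776)) * (2 * sd z)
      = 2 * 304.9041 * z + -7.4479776 := by
    field_simp
  have hML : 1 / (2 * sd z) * (2 * 304.9041 * z + -7.4479776) ≤ 4.3066956 := by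
    nlinarith [hE2, hsl2, hsu, hl, hr, sd_pos z]
  have hMU : (3.540168:ℝ) ≤ 1 / (2 * sd z) * (2 * 304.9041 * z + -7.4479776) := by
    nlinarith [hE2, hsl2, hsu, hl, hr, sd_pos z]
  have hL : (-0.9229:ℝ) ≤ xid z := by
    unfold xid; rw [le_div_iff₀ (by norm_num : (0:ℝ) < 2 * 2.382)]; linarith
  have hU : xid z ≤ -0.762 := by
    unfold xid; rw [div_le_iff₀ (by norm_num : (0:ℝ) < 2 * 2.382)]; linarith
  have hb1 : 2 * ((-2 - xid z) / (1 - 2 * 0.454 - 2 * z - xi1 z))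
      ≤ (-1.0771) / (1 / 2 - 0.454 - z) := by
    rw [show (2:ℝ) * ((-2 - xid z) / (1 - 2 * 0.454 - 2 * z - xi1 z))
        = (2 * (-2 - xid z)) / (1 - 2 * 0.454 - 2 * z - xi1 z) from by ring,
      div_le_div_iff₀ pu pA6]
    nlinarith [mul_nonneg (show (0:ℝ) ≤ xid z - (-0.9229) by linarith) pA6.le,
      mul_nonneg (show (0:ℝ) ≤ 2 + (-0.9229) by norm_num)
        (show (0:ℝ) ≤ 2 * (1 / 2 - 0.454 - z) - (1 - 2 * 0.454 - 2 * z - xi1 z) by linarith [pxi])]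
  have hb1c : 2 / (1 / 2 - 0.454 - z) - 1 / (1 / 2 - 0.454 - z)
      + (-1.0771) / (1 / 2 - 0.454 - z) ≤ -13.408695 := by
    rw [show (2:ℝ) / (1 / 2 - 0.454 - z) - 1 / (1 / 2 - 0.454 - z)
        + (-1.0771) / (1 / 2 - 0.454 - z)
        = (-0.0771) / (1 / 2 - 0.454 - z) from by ring, div_le_iff₀ pA6]
    linarith
  have e2 : (4:ℝ) / (1 / 2 - 0.454 + 2 * z) = 8 / (1 - 2 * 0.454 + 4 * z) := by
    rw [div_eq_div_iff pA7.ne' pA2.ne']; ring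
  have hb2 : (19.048:ℝ) / (1 - 2 * 0.454 + 4 * z)
      ≤ 4 * ((4 - xid z) / (1 - 2 * 0.454 + 4 * z - xi1 z)) := by
    rw [show (4:ℝ) * ((4 - xid z) / (1 - 2 * 0.454 + 4 * z - xi1 z))
        = (4 * (4 - xid z)) / (1 - 2 * 0.454 + 4 * z - xi1 z) from by ring,
      div_le_div_iff₀ pA2 pv]
    nlinarith [mul_nonneg (show (0:ℝ) ≤ (19.048:ℝ) by norm_num)
        (show (0:ℝ) ≤ (1 - 2 * 0.454 + 4 * z) - (1 - 2 * 0.454 + 4 * z - xi1 z) by linarith [pxi]),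
      mul_nonneg (show (0:ℝ) ≤ (-0.762) - xid z by linarith) pA2.le]
  have hb2c : 16 / (1 - 2 * 0.454 + 4 * z) - 8 / (1 - 2 * 0.454 + 4 * z)
      - (19.048:ℝ) / (1 - 2 * 0.454 + 4 * z) ≤ -40.028985 := by
    rw [show (16:ℝ) / (1 - 2 * 0.454 + 4 * z) - 8 / (1 - 2 * 0.454 + 4 * z)
        - (19.048:ℝ) / (1 - 2 * 0.454 + 4 * z)
        = (-11.048) / (1 - 2 * 0.454 + 4 * z) from by ring, div_le_iff₀ pA2]
    linarith
  have hwub : 10 * 0.454 - 7 / 2 - 5 * z + xi1 z ≤ 0.85575 := by linarith [hxiub]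
  have hb3 : 5 * ((-5 + xid z) / (10 * 0.454 - 7 / 2 - 5 * z + xi1 z)) ≤ -33.666374 := by
    rw [show (5:ℝ) * ((-5 + xid z) / (10 * 0.454 - 7 / 2 - 5 * z + xi1 z))
        = (5 * (-5 + xid z)) / (10 * 0.454 - 7 / 2 - 5 * z + xi1 z) from by ring,
      div_le_iff₀ pw]
    nlinarith [hU, hwub, pw]
  have hb4 : 9 / (6 * 0.454 - 3 / 2 + 3 * z) ≤ 6.692694 := by
    rw [div_le_iff₀ pA3]; linarith
  have hb5 : 81 / (6 * 0.454 - 3 / 2 - 9 * z) ≤ 100.0 := by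
    rw [div_le_iff₀ pA4]; linarith
  have hb6 : (2.202643:ℝ) ≤ 1 / (2 * 0.454 + z - 1 / 2) := by
    rw [le_div_iff₀ pA5]; linarith
  have hb7 : (31.331592:ℝ) ≤ 9 / (2 * 0.454 - 3 * z - 1 / 2) := by
    rw [le_div_iff₀ pA8]; linarith
  unfold F2
  linarith [e1, e2, hb1, hb1c, hb2, hb2c, hb3, hb4, hb5, hb6, hb7]

lemma F2_lt {z : ℝ} (hz0 : 0 ≤ z) (hz1 : z < 0.046) : F2 z < -2.46 := by
  rcases le_or_gt z 0.023 with h1 | h1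
  · exact F2_lt_0 hz0 h1 hz1
  rcases le_or_gt z 0.0345 with h2 | h2
  · exact F2_lt_1 h1.le h2 hz1
  rcases le_or_gt z 0.04025 with h3 | h3
  · exact F2_lt_2 h2.le h3 hz1
  · exact F2_lt_3 h3.le hz1.le hz1

lemma log_h_hasDeriv {z : ℝ} (hz : z ∈ Set.Ioo (-0.001:ℝ) 0.046) :
    HasDerivAt (fun y : ℝ => Real.log (hfun 0.454 y (xi1 y))) (F1 z) z := by
  have h := hasDerivAt_S' hz.1 hz.2
  apply h.congr_of_eventuallyEq
  filter_upwards [isOpen_Ioo.mem_nhds hz] with y hy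
  exact log_h_eq hy.1 hy.2

lemma deriv2_eq {ζ : ℝ} (hζI : ζ ∈ Set.Ioo (-0.001:ℝ) 0.046) :
    deriv (deriv fun z : ℝ => Real.log (hfun 0.454 z (xi1 z))) ζ = F2 ζ := by
  have hev : deriv (fun y : ℝ => Real.log (hfun 0.454 y (xi1 y))) =ᶠ[nhds ζ] F1 := by
    filter_upwards [isOpen_Ioo.mem_nhds hζI] with y hy
    exact (log_h_hasDeriv hy).deriv
  rw [hev.deriv_eq, (hasDerivAt_F1 hζI.1 hζI.2).deriv]


/-- the second derivative of `ζ ↦ ln h(0.454, ζ, ξ₁(ζ))` is less than `−2.46`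
on `[0, 0.046)`; in particular this function is strictly concave there. -/
theorem log_h_along_xi1_second_deriv_lt :
    (∀ ζ : ℝ, 0 ≤ ζ → ζ < 0.046 →
        deriv (deriv fun z : ℝ => Real.log (hfun 0.454 z (xi1 z))) ζ < -2.46) ∧
      StrictConcaveOn ℝ (Set.Ico (0 : ℝ) 0.046)
        (fun z : ℝ => Real.log (hfun 0.454 z (xi1 z))) := by
  constructor
  · intro ζ h0 h1
    rw [deriv2_eq ⟨by norm_num; linarith, h1⟩]
    exact F2_lt h0 h1
  · apply strictConcaveOn_of_deriv2_neg (convex_Ico _ _)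
    · intro x hx
      have hxI : x ∈ Set.Ioo (-0.001:ℝ) 0.046 := ⟨by norm_num; linarith [hx.1], hx.2⟩
      exact (log_h_hasDeriv hxI).differentiableAt.continuousAt.continuousWithinAt
    · intro x hx
      rw [interior_Ico] at hx
      have hxI : x ∈ Set.Ioo (-0.001:ℝ) 0.046 := ⟨by norm_num; linarith [hx.1], hx.2⟩
      have h2 : deriv^[2] (fun z : ℝ => Real.log (hfun 0.454 z (xi1 z))) x
          = deriv (deriv fun z : ℝ => Real.log (hfun 0.454 z (xi1 z))) x := by
        simp [Function.iterate_succ_apply', Function.iterate_zero_apply]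
      rw [h2, deriv2_eq hxI]
      have := F2_lt hx.1.le hx.2
      linarith
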